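/- Let n ≥ 1, let R be an n×n real upper triangular matrix with positive diagonal entries r_11,…,r_nn, let σ > 0, and let a_1,…,a_n > 0. Then ∫_{[−a_1,a_1]×⋯×[−a_n,a_n]} exp(−‖Rξ‖²/(2σ²)) dξ ≤ ∏_{i=1}^n ∫_{−a_i}^{a_i} exp(−r_ii² t²/(2σ²)) dt. -/

import Mathlib

open MeasureTheory ProbabilityTheory Matrix
open scoped ENNReal NNReal

/-- Nearest integer rounding, with ties broken toward the integer of smaller magnitude. -/
noncomputable def nround (x : ℝ) : ℤ :=
  if 0 ≤ x then ⌈x - 1 / 2⌉ else ⌊x + 1 / 2⌋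

/-- Clamp the nearest integer of `c` to the interval `[a, b]`:
`a` if `⌊c⌉ ≤ a`, `b` if `⌊c⌉ ≥ b`, and `⌊c⌉` otherwise. -/
noncomputable def clampInt (a b : ℤ) (c : ℝ) : ℤ :=
  if nround c ≤ a then a
  else if b ≤ nround c then b
  else nround c

/-- The box-constrained rounding detector computed from `d`. -/
noncomputable def roundDetector {n : ℕ} (l u : Fin n → ℤ) (d : Fin n → ℝ) : Fin n → ℤ :=
  fun i => clampInt (l i) (u i) (d i)

/-- Auxiliary recursion for the box-constrained Babai detector: `babaiAux R l u y k`
has the correct Babai values at indices `i` with `i + k ≥ n` (computed from the last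
index downwards). -/
noncomputable def babaiAux {n : ℕ} (R : Matrix (Fin n) (Fin n) ℝ) (l u : Fin n → ℤ)
    (y : Fin n → ℝ) : ℕ → Fin n → ℤ
  | 0 => fun _ => 0
  | k + 1 => fun i =>
      if i.val + (k + 1) = n then
        clampInt (l i) (u i)
          ((y i - ∑ j : Fin n, if i < j then R i j * (babaiAux R l u y k j : ℝ) else 0) / R i i)
      else babaiAux R l u y k i

/-- The box-constrained Babai detector computed from `y`, for upper triangular `R`:
for `i = n, …, 1`, `c_i = (y_i - ∑_{j>i} r_{ij} x_j^BB)/r_{ii}` and `x_i^BB` is `⌊c_i⌉`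
clamped to `[l_i, u_i]`. -/
noncomputable def babaiDetector {n : ℕ} (R : Matrix (Fin n) (Fin n) ℝ) (l u : Fin n → ℤ)
    (y : Fin n → ℝ) : Fin n → ℤ :=
  babaiAux R l u y n

/-- `phi σ ζ = (2/√(2π)) ∫_0^{ζ/(2σ)} exp(-t²/2) dt`. -/
noncomputable def phi (σ ζ : ℝ) : ℝ :=
  2 / Real.sqrt (2 * Real.pi) * ∫ t in (0:ℝ)..(ζ / (2 * σ)), Real.exp (-(t ^ 2) / 2)


open intervalIntegral in

/-- Gaussian integral over an interval of fixed length is maximized when centered. -/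
lemma gauss_shift_le (σ b : ℝ) (hσ : 0 < σ) (hb : 0 ≤ b) (c : ℝ) :
    (∫ s in (c - b)..(c + b), Real.exp (-(s ^ 2) / (2 * σ ^ 2)))
      ≤ ∫ s in (-b)..b, Real.exp (-(s ^ 2) / (2 * σ ^ 2)) := by
  set g : ℝ → ℝ := fun s => Real.exp (-(s ^ 2) / (2 * σ ^ 2)) with hg
  have hgc : Continuous g := by fun_prop
  have hint : ∀ x y : ℝ, IntervalIntegrable g volume x y := fun x y =>
    hgc.intervalIntegrable x y
  set F : ℝ → ℝ := fun c => ∫ s in (c - b)..(c + b), g s with hF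
  have hFeq : ∀ c, F c = (∫ s in (0:ℝ)..(c + b), g s) - ∫ s in (0:ℝ)..(c - b), g s := by
    intro c
    rw [integral_interval_sub_left (hint 0 (c+b)) (hint 0 (c-b))]
  have hderiv : ∀ c : ℝ, HasDerivAt F (g (c + b) - g (c - b)) c := by
    intro c
    have h1 : HasDerivAt (fun x : ℝ => ∫ s in (0:ℝ)..x, g s) (g (c + b)) (c + b) :=
      integral_hasDerivAt_right (hint 0 (c+b)) (hgc.stronglyMeasurableAtFilter _ _)
        hgc.continuousAt
    have h2 : HasDerivAt (fun x : ℝ => ∫ s in (0:ℝ)..x, g s) (g (c - b)) (c - b) :=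
      integral_hasDerivAt_right (hint 0 (c-b)) (hgc.stronglyMeasurableAtFilter _ _)
        hgc.continuousAt
    have h1' := h1.comp c ((hasDerivAt_id c).add_const b)
    have h2' := h2.comp c ((hasDerivAt_id c).sub_const b)
    simp only [mul_one] at h1' h2'
    have := h1'.sub h2'
    refine this.congr_of_eventuallyEq (Filter.Eventually.of_forall fun x => ?_)
    simp [hFeq]
  have hanti : AntitoneOn F (Set.Ici 0) := by
    apply antitoneOn_of_deriv_nonpos (convex_Ici 0)
    · exact (continuous_iff_continuousAt.2 fun x => (hderiv x).continuousAt).continuousOn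
    · intro x hx
      exact (hderiv x).differentiableAt.differentiableWithinAt
    · intro x hx
      rw [(hderiv x).deriv]
      have hx0 : 0 ≤ x := le_of_lt (by simpa using hx)
      have h1 : -(x + b) ^ 2 ≤ -(x - b) ^ 2 := by nlinarith
      have h2 : g (x + b) ≤ g (x - b) := by
        apply Real.exp_le_exp.2
        gcongr
      linarith
  have heven : ∀ c : ℝ, F (-c) = F c := by
    intro c
    simp only [hF]
    have : ∀ x y : ℝ, (∫ s in x..y, g (-s)) = ∫ s in (-y)..(-x), g s :=
      fun x y => integral_comp_neg g
    have h := this (c - b) (c + b)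
    simp only [hg, neg_sq, neg_neg] at h ⊢
    rw [show (-c - b) = -(c+b) by ring, show (-c + b) = -(c-b) by ring, ← h]
  rcases le_or_gt 0 c with hc | hc
  · have := hanti (Set.mem_Ici.2 le_rfl) (Set.mem_Ici.2 hc) hc
    simpa [hF, zero_sub, zero_add] using this
  · have := hanti (Set.mem_Ici.2 le_rfl) (Set.mem_Ici.2 (by linarith : (0:ℝ) ≤ -c)) (by linarith)
    rw [heven] at this
    simpa [hF, zero_sub, zero_add] using this

lemma oneD_shift_le (r σ a c : ℝ) (hr : 0 < r) (hσ : 0 < σ) (ha : 0 ≤ a) :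
    (∫ t in Set.Icc (-a) a, Real.exp (-((r * t + c) ^ 2) / (2 * σ ^ 2)))
      ≤ ∫ t in Set.Icc (-a) a, Real.exp (-(r ^ 2 * t ^ 2) / (2 * σ ^ 2)) := by
  have hle : -a ≤ a := by linarith
  rw [MeasureTheory.integral_Icc_eq_integral_Ioc, MeasureTheory.integral_Icc_eq_integral_Ioc,
    ← intervalIntegral.integral_of_le hle, ← intervalIntegral.integral_of_le hle]
  have h1 : (∫ t in (-a)..a, Real.exp (-((r * t + c) ^ 2) / (2 * σ ^ 2)))
      = r⁻¹ • ∫ s in (r * (-a) + c)..(r * a + c), Real.exp (-(s ^ 2) / (2 * σ ^ 2)) := by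
    exact intervalIntegral.integral_comp_mul_add
      (fun s => Real.exp (-(s ^ 2) / (2 * σ ^ 2))) (ne_of_gt hr) c
  have h2 : (∫ t in (-a)..a, Real.exp (-(r ^ 2 * t ^ 2) / (2 * σ ^ 2)))
      = r⁻¹ • ∫ s in (r * (-a) + 0)..(r * a + 0), Real.exp (-(s ^ 2) / (2 * σ ^ 2)) := by
    have := intervalIntegral.integral_comp_mul_add (a := -a) (b := a)
      (fun s => Real.exp (-(s ^ 2) / (2 * σ ^ 2))) (ne_of_gt hr) 0
    simp only [add_zero] at this ⊢
    rw [← this]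
    congr 1 with t
    ring_nf
  rw [h1, h2]
  have key : (∫ s in (r * (-a) + c)..(r * a + c), Real.exp (-(s ^ 2) / (2 * σ ^ 2)))
      ≤ ∫ s in (r * (-a) + 0)..(r * a + 0), Real.exp (-(s ^ 2) / (2 * σ ^ 2)) := by
    have hb : 0 ≤ r * a := by positivity
    have := gauss_shift_le σ (r * a) hσ hb c
    rw [show r * (-a) + c = c - r * a by ring, show r * a + c = c + r * a by ring,
      show r * (-a) + 0 = -(r * a) by ring, show r * a + 0 = r * a by ring]
    exact this
  have : (0:ℝ) ≤ r⁻¹ := by positivity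
  simpa [smul_eq_mul] using mul_le_mul_of_nonneg_left key this

lemma pi_restrict_eq {n : ℕ} (s : Fin n → Set ℝ) (hs : ∀ i, MeasurableSet (s i)) :
    Measure.pi (fun i => (volume : Measure ℝ).restrict (s i))
      = (volume : Measure (Fin n → ℝ)).restrict (Set.univ.pi s) := by
  refine Measure.pi_eq fun t ht => ?_
  rw [Measure.restrict_apply (MeasurableSet.univ_pi ht)]
  rw [← Set.pi_inter_distrib, volume_pi, Measure.pi_pi]
  exact Finset.prod_congr rfl fun i _ => (Measure.restrict_apply (ht i)).symm

lemma piFinSuccAbove_last_symm (n : ℕ) (z : ℝ × (Fin n → ℝ)) :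
    (MeasurableEquiv.piFinSuccAbove (fun _ => ℝ) (Fin.last n)).symm z
      = Fin.snoc z.2 z.1 := by
  simp [MeasurableEquiv.piFinSuccAbove, Fin.insertNthEquiv, Fin.insertNth_last']

lemma mulVec_snoc_sum {n : ℕ} (R : Matrix (Fin (n+1)) (Fin (n+1)) ℝ)
    (hupper : ∀ i j : Fin (n+1), j < i → R i j = 0) (b : Fin (n+1) → ℝ)
    (x : ℝ) (y : Fin n → ℝ) :
    (∑ j, ((R *ᵥ (Fin.snoc y x : Fin (n+1) → ℝ)) j + b j) ^ 2)
      = (∑ j : Fin n, ((R.submatrix Fin.castSucc Fin.castSucc *ᵥ y) j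
          + (R (Fin.castSucc j) (Fin.last n) * x + b (Fin.castSucc j))) ^ 2)
        + (R (Fin.last n) (Fin.last n) * x + b (Fin.last n)) ^ 2 := by
  have hrow : ∀ j : Fin (n+1), (R *ᵥ (Fin.snoc y x : Fin (n+1) → ℝ)) j
      = (∑ k : Fin n, R j (Fin.castSucc k) * y k) + R j (Fin.last n) * x := by
    intro j
    simp [Matrix.mulVec, dotProduct, Fin.sum_univ_castSucc]
  rw [Fin.sum_univ_castSucc]
  congr 1
  · refine Finset.sum_congr rfl fun j _ => ?_
    rw [hrow]
    congr 1
    simp only [Matrix.mulVec, dotProduct, Matrix.submatrix_apply]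
    ring
  · rw [hrow]
    have h0 : ∀ k : Fin n, R (Fin.last n) (Fin.castSucc k) = 0 := fun k =>
      hupper _ _ (Fin.castSucc_lt_last k)
    simp [h0]

lemma aux_box (n : ℕ) :
    ∀ (R : Matrix (Fin n) (Fin n) ℝ),
      (∀ i j : Fin n, j < i → R i j = 0) →
      (∀ i : Fin n, 0 < R i i) →
      ∀ (σ : ℝ), 0 < σ →
      ∀ (a : Fin n → ℝ), (∀ i, 0 < a i) →
      ∀ (b : Fin n → ℝ),
      (∫ ξ, Real.exp (-(∑ j, ((R *ᵥ ξ) j + b j) ^ 2) / (2 * σ ^ 2))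
          ∂(Measure.pi fun i => (volume : Measure ℝ).restrict (Set.Icc (-(a i)) (a i))))
        ≤ ∏ i, ∫ t in Set.Icc (-(a i)) (a i), Real.exp (-(R i i ^ 2 * t ^ 2) / (2 * σ ^ 2)) := by
  induction n with
  | zero =>
      intro R _ _ σ hσ a _ b
      simp only [Finset.univ_eq_empty, Finset.sum_empty, Finset.prod_empty, neg_zero, zero_div,
        Real.exp_zero, integral_const, smul_eq_mul, mul_one]
      simp [measureReal_def]
  | succ n ih =>
      intro R hupper hdiag σ hσ a ha b
      set μ : Fin (n+1) → Measure ℝ :=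
        fun i => (volume : Measure ℝ).restrict (Set.Icc (-(a i)) (a i)) with hμ
      haveI : ∀ i, IsFiniteMeasure (μ i) := fun i =>
        ⟨by rw [Measure.restrict_apply_univ]; exact measure_Icc_lt_top⟩
      have hmp := (measurePreserving_piFinSuccAbove μ (Fin.last n)).symm
      have step1 := hmp.integral_comp'
        (fun ξ : Fin (n+1) → ℝ => Real.exp (-(∑ j, ((R *ᵥ ξ) j + b j) ^ 2) / (2 * σ ^ 2)))
      simp only [piFinSuccAbove_last_symm] at step1
      rw [← step1]
      set ν : Measure (Fin n → ℝ) := Measure.pi fun j => μ ((Fin.last n).succAbove j) with hν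
      have hν' : ν = Measure.pi fun j : Fin n =>
          (volume : Measure ℝ).restrict (Set.Icc (-(a (Fin.castSucc j))) (a (Fin.castSucc j))) := by
        rw [hν]
        congr 1 with j
        rw [Fin.succAbove_last]
      set R' := R.submatrix Fin.castSucc Fin.castSucc with hR'
      set rl := R (Fin.last n) (Fin.last n) with hrl
      have hfz : ∀ z : ℝ × (Fin n → ℝ),
          Real.exp (-(∑ j, ((R *ᵥ (Fin.snoc z.2 z.1 : Fin (n+1) → ℝ)) j + b j) ^ 2) / (2 * σ ^ 2))
          = Real.exp (-((rl * z.1 + b (Fin.last n)) ^ 2) / (2 * σ ^ 2))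
            * Real.exp (-(∑ j : Fin n, ((R' *ᵥ z.2) j
                + (R (Fin.castSucc j) (Fin.last n) * z.1 + b (Fin.castSucc j))) ^ 2)
                / (2 * σ ^ 2)) := by
        intro z
        rw [mulVec_snoc_sum R hupper b z.1 z.2, ← Real.exp_add]
        congr 1
        ring
      have hFcont : Continuous (fun z : ℝ × (Fin n → ℝ) =>
          Real.exp (-(∑ j, ((R *ᵥ (Fin.snoc z.2 z.1 : Fin (n+1) → ℝ)) j + b j) ^ 2)
            / (2 * σ ^ 2))) := by
        have hsnoc : Continuous (fun z : ℝ × (Fin n → ℝ) =>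
            (Fin.snoc z.2 z.1 : Fin (n+1) → ℝ)) := by
          apply continuous_pi
          intro j
          induction j using Fin.lastCases with
          | last => simpa using continuous_fst
          | cast i =>
              simp only [Fin.snoc_castSucc]
              exact (continuous_apply i).comp continuous_snd
        apply Real.continuous_exp.comp
        apply Continuous.div_const
        apply Continuous.neg
        apply continuous_finset_sum
        intro j _
        have h1 : Continuous fun ξ : Fin (n+1) → ℝ => (R *ᵥ ξ) j + b j := by
          simp only [Matrix.mulVec, dotProduct]
          fun_prop
        exact (h1.comp hsnoc).pow 2
      have hFint : Integrable (fun z : ℝ × (Fin n → ℝ) =>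
          Real.exp (-(∑ j, ((R *ᵥ (Fin.snoc z.2 z.1 : Fin (n+1) → ℝ)) j + b j) ^ 2)
            / (2 * σ ^ 2))) ((μ (Fin.last n)).prod ν) := by
        refine (integrable_const (1:ℝ)).mono' hFcont.aestronglyMeasurable ?_
        filter_upwards with z
        rw [Real.norm_eq_abs, abs_of_pos (Real.exp_pos _)]
        apply Real.exp_le_one_iff.2
        apply div_nonpos_of_nonpos_of_nonneg
        · exact neg_nonpos.2 (Finset.sum_nonneg fun j _ => sq_nonneg _)
        · positivity
      rw [integral_prod _ hFint]
      set C : ℝ := ∏ i : Fin n, ∫ t in Set.Icc (-(a (Fin.castSucc i))) (a (Fin.castSucc i)),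
        Real.exp (-(R' i i ^ 2 * t ^ 2) / (2 * σ ^ 2)) with hC
      have hC0 : 0 ≤ C :=
        Finset.prod_nonneg fun i _ => integral_nonneg fun t => (Real.exp_pos _).le
      have hinner : ∀ x : ℝ,
          (∫ y, Real.exp (-(∑ j, ((R *ᵥ (Fin.snoc y x : Fin (n+1) → ℝ)) j + b j) ^ 2)
              / (2 * σ ^ 2)) ∂ν)
            ≤ Real.exp (-((rl * x + b (Fin.last n)) ^ 2) / (2 * σ ^ 2)) * C := by
        intro x
        have : (∫ y, Real.exp (-(∑ j, ((R *ᵥ (Fin.snoc y x : Fin (n+1) → ℝ)) j + b j) ^ 2)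
              / (2 * σ ^ 2)) ∂ν)
            = Real.exp (-((rl * x + b (Fin.last n)) ^ 2) / (2 * σ ^ 2))
              * ∫ y, Real.exp (-(∑ j : Fin n, ((R' *ᵥ y) j
                  + (R (Fin.castSucc j) (Fin.last n) * x + b (Fin.castSucc j))) ^ 2)
                  / (2 * σ ^ 2)) ∂ν := by
          simp_rw [hfz (⟨_, _⟩ : ℝ × (Fin n → ℝ))]
          exact integral_const_mul _ _
        rw [this]
        apply mul_le_mul_of_nonneg_left ?_ (Real.exp_pos _).le
        rw [hν']
        exact ih R' (fun i j h => hupper _ _ (by simpa using h)) (fun i => hdiag _)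
          σ hσ (fun i => a (Fin.castSucc i)) (fun i => ha _)
          (fun j => R (Fin.castSucc j) (Fin.last n) * x + b (Fin.castSucc j))
      have houter : (∫ x, (∫ y, Real.exp (-(∑ j,
            ((R *ᵥ (Fin.snoc y x : Fin (n+1) → ℝ)) j + b j) ^ 2) / (2 * σ ^ 2)) ∂ν)
            ∂(μ (Fin.last n)))
          ≤ (∫ x, Real.exp (-((rl * x + b (Fin.last n)) ^ 2) / (2 * σ ^ 2))
              ∂(μ (Fin.last n))) * C := by
        rw [← integral_mul_const]
        apply integral_mono_of_nonneg
        · filter_upwards with x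
          exact integral_nonneg fun y => (Real.exp_pos _).le
        · apply Integrable.mul_const
          exact Continuous.integrableOn_Icc (by fun_prop)
        · filter_upwards with x
          exact hinner x
      refine houter.trans ?_
      have h1d : (∫ x, Real.exp (-((rl * x + b (Fin.last n)) ^ 2) / (2 * σ ^ 2))
            ∂(μ (Fin.last n)))
          ≤ ∫ t in Set.Icc (-(a (Fin.last n))) (a (Fin.last n)),
              Real.exp (-(rl ^ 2 * t ^ 2) / (2 * σ ^ 2)) :=
        oneD_shift_le rl σ (a (Fin.last n)) (b (Fin.last n)) (hdiag _) hσ (ha _).le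
      refine (mul_le_mul_of_nonneg_right h1d hC0).trans_eq ?_
      rw [Fin.prod_univ_castSucc]
      rw [mul_comm]
      rfl

/-- The Gaussian-type integral over a centered box is bounded by the product of the
one-dimensional integrals with the diagonal entries of `R`. -/
theorem gaussian_integral_box_le_prod
    {n : ℕ} (hn : 1 ≤ n)
    (R : Matrix (Fin n) (Fin n) ℝ)
    (hupper : ∀ i j : Fin n, j < i → R i j = 0)
    (hdiag : ∀ i : Fin n, 0 < R i i)
    (σ : ℝ) (hσ : 0 < σ)
    (a : Fin n → ℝ) (ha : ∀ i, 0 < a i) :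
    (∫ ξ in Set.univ.pi (fun i => Set.Icc (-(a i)) (a i)),
        Real.exp (-(∑ j, ((R *ᵥ ξ) j) ^ 2) / (2 * σ ^ 2)))
      ≤ ∏ i, ∫ t in Set.Icc (-(a i)) (a i), Real.exp (-(R i i ^ 2 * t ^ 2) / (2 * σ ^ 2)) := by
  have hμ : Measure.pi (fun i : Fin n => (volume : Measure ℝ).restrict (Set.Icc (-(a i)) (a i)))
      = (volume : Measure (Fin n → ℝ)).restrict
          (Set.univ.pi fun i => Set.Icc (-(a i)) (a i)) :=
    pi_restrict_eq _ (fun i => measurableSet_Icc)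
  have := aux_box n R hupper hdiag σ hσ a ha 0
  rw [hμ] at this
  simpa using this
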